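/- arXiv:2511.03443 — 10 statements merged into one kernel-verified Lean document; each statement's English description precedes it below -/
import Mathlib

section
/- Let f : ℝ^{n×p} → ℝ be differentiable with ∇f L-Lipschitz continuous (with respect to the Frobenius norm) for some L ≥ 0, and let η > L. If Z, X ∈ O^{n,p}_+ satisfy f̄_Z(X) ≤ f̄_Z(Z), then f(Z) − f(X) ≥ ((η − L)/2)·‖X − Z‖_F². -/
open Matrix

attribute [local instance] Matrix.frobeniusNormedAddCommGroup Matrix.frobeniusNormedSpace

/-- Frobenius norm of a real matrix. -/
noncomputable def fnorm {n p : ℕ} (A : Matrix (Fin n) (Fin p) ℝ) : ℝ :=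
  Real.sqrt (∑ i, ∑ j, (A i j) ^ 2)

/-- Frobenius inner product of real matrices. -/
noncomputable def finner {n p : ℕ} (A B : Matrix (Fin n) (Fin p) ℝ) : ℝ :=
  ∑ i, ∑ j, A i j * B i j

/-- `g` is the (Euclidean) gradient of the differentiable function `f`. -/
def IsGradient {n p : ℕ} (f : Matrix (Fin n) (Fin p) ℝ → ℝ)
    (g : Matrix (Fin n) (Fin p) ℝ → Matrix (Fin n) (Fin p) ℝ) : Prop :=
  Differentiable ℝ f ∧ ∀ Z H, fderiv ℝ f Z H = finner (g Z) H

/-- The proximal linearization `f̄_Z(X) = f(Z) + ⟨∇f(Z), X − Z⟩ + (η/2)‖X − Z‖_F²`. -/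
noncomputable def fbar {n p : ℕ} (f : Matrix (Fin n) (Fin p) ℝ → ℝ)
    (g : Matrix (Fin n) (Fin p) ℝ → Matrix (Fin n) (Fin p) ℝ)
    (η : ℝ) (Z X : Matrix (Fin n) (Fin p) ℝ) : ℝ :=
  f Z + finner (g Z) (X - Z) + η / 2 * fnorm (X - Z) ^ 2

lemma fnorm_nonneg {n p : ℕ} (A : Matrix (Fin n) (Fin p) ℝ) : 0 ≤ fnorm A :=
  Real.sqrt_nonneg _

lemma fnorm_zero {n p : ℕ} : fnorm (0 : Matrix (Fin n) (Fin p) ℝ) = 0 := by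
  simp [fnorm]

lemma finner_zero {n p : ℕ} (A : Matrix (Fin n) (Fin p) ℝ) : finner A 0 = 0 := by
  simp [finner]

lemma fnorm_smul {n p : ℕ} (c : ℝ) (A : Matrix (Fin n) (Fin p) ℝ) :
    fnorm (c • A) = |c| * fnorm A := by
  unfold fnorm
  rw [← Real.sqrt_sq_eq_abs, ← Real.sqrt_mul (sq_nonneg c)]
  congr 1
  rw [Finset.mul_sum]
  refine Finset.sum_congr rfl fun i _ => ?_
  rw [Finset.mul_sum]
  refine Finset.sum_congr rfl fun j _ => ?_
  simp [Matrix.smul_apply, mul_pow]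

/-- Cauchy–Schwarz for the Frobenius inner product. -/
lemma finner_le_fnorm {n p : ℕ} (A B : Matrix (Fin n) (Fin p) ℝ) :
    finner A B ≤ fnorm A * fnorm B := by
  unfold finner fnorm
  rw [← Fintype.sum_prod_type (f := fun ij : Fin n × Fin p => A ij.1 ij.2 * B ij.1 ij.2),
    ← Fintype.sum_prod_type (f := fun ij : Fin n × Fin p => (A ij.1 ij.2) ^ 2),
    ← Fintype.sum_prod_type (f := fun ij : Fin n × Fin p => (B ij.1 ij.2) ^ 2)]
  exact Real.sum_mul_le_sqrt_mul_sqrt _ _ _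

/-- Lemma `le:lip-f`: if `∇f` is `L`-Lipschitz, `η > L`, and
`Z, X ∈ O^{n,p}_+` satisfy `f̄_Z(X) ≤ f̄_Z(Z)`, then
`f(Z) − f(X) ≥ ((η − L)/2)‖X − Z‖_F²`. -/
theorem sufficient_decrease_of_proximal_linearization
    {n p : ℕ} (f : Matrix (Fin n) (Fin p) ℝ → ℝ)
    (g : Matrix (Fin n) (Fin p) ℝ → Matrix (Fin n) (Fin p) ℝ)
    (L η : ℝ) (hL : 0 ≤ L) (hη : L < η)
    (hgrad : IsGradient f g)
    (hLip : ∀ A B : Matrix (Fin n) (Fin p) ℝ, fnorm (g A - g B) ≤ L * fnorm (A - B))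
    (Z X : Matrix (Fin n) (Fin p) ℝ)
    (hZ : Zᵀ * Z = 1 ∧ ∀ i j, 0 ≤ Z i j)
    (hX : Xᵀ * X = 1 ∧ ∀ i j, 0 ≤ X i j)
    (hdec : fbar f g η Z X ≤ fbar f g η Z Z) :
    (η - L) / 2 * fnorm (X - Z) ^ 2 ≤ f Z - f X := by
  obtain ⟨hf, hg⟩ := hgrad
  set d : Matrix (Fin n) (Fin p) ℝ := X - Z with hd
  -- the curve and its derivative
  set c : ℝ → Matrix (Fin n) (Fin p) ℝ := fun t => Z + t • d with hc
  set φ' : ℝ → ℝ := fun t => finner (g (c t)) d with hφ'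
  have hcd : ∀ t : ℝ, HasDerivAt c d t := fun t => by
    exact one_smul ℝ d ▸ ((hasDerivAt_id t).smul_const d).const_add Z
  have hderiv : ∀ t : ℝ, HasDerivAt (fun t => f (c t)) (φ' t) t := fun t => by
    have h1 : HasDerivAt (fun t => f (c t)) (fderiv ℝ f (c t) d) t :=
      (hf (c t)).hasFDerivAt.comp_hasDerivAt t (hcd t)
    simpa [hg] using h1
  -- φ' is Lipschitz, hence continuous
  have hφ'cont : Continuous φ' := by
    rw [Metric.continuous_iff]
    intro t ε hε
    rcases eq_or_lt_of_le (fnorm_nonneg d) with h0 | h0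
    · refine ⟨1, one_pos, fun s _ => ?_⟩
      have : ∀ u : ℝ, φ' u = φ' t := by
        intro u
        have : finner (g (c u) - g (c t)) d ≤ 0 ∧ finner (g (c t) - g (c u)) d ≤ 0 := by
          constructor <;>
          · refine le_trans (finner_le_fnorm _ _) ?_
            rw [← h0, mul_zero]
        have h2 : finner (g (c u) - g (c t)) d = φ' u - φ' t := by
          simp only [hφ', finner]
          rw [← Finset.sum_sub_distrib]
          refine Finset.sum_congr rfl fun i _ => ?_
          rw [← Finset.sum_sub_distrib]
          refine Finset.sum_congr rfl fun j _ => ?_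
          simp [Matrix.sub_apply]; ring
        have h3 : finner (g (c t) - g (c u)) d = φ' t - φ' u := by
          simp only [hφ', finner]
          rw [← Finset.sum_sub_distrib]
          refine Finset.sum_congr rfl fun i _ => ?_
          rw [← Finset.sum_sub_distrib]
          refine Finset.sum_congr rfl fun j _ => ?_
          simp [Matrix.sub_apply]; ring
        rw [h2] at this; rw [h3] at this
        linarith [this.1, this.2]
      simpa [this s, dist_self] using hε
    · refine ⟨ε / (L * fnorm d ^ 2 + 1), by positivity, fun s hs => ?_⟩
      have key : ∀ u v : ℝ, φ' u - φ' v ≤ L * fnorm d ^ 2 * |u - v| := by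
        intro u v
        have h2 : finner (g (c u) - g (c v)) d = φ' u - φ' v := by
          simp only [hφ', finner]
          rw [← Finset.sum_sub_distrib]
          refine Finset.sum_congr rfl fun i _ => ?_
          rw [← Finset.sum_sub_distrib]
          refine Finset.sum_congr rfl fun j _ => ?_
          simp [Matrix.sub_apply]; ring
        rw [← h2]
        refine le_trans (finner_le_fnorm _ _) ?_
        have h3 : c u - c v = (u - v) • d := by
          simp [hc]; module
        have h4 : fnorm (g (c u) - g (c v)) ≤ L * (|u - v| * fnorm d) := by
          have := hLip (c u) (c v)
          rwa [h3, fnorm_smul] at this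
        calc fnorm (g (c u) - g (c v)) * fnorm d
            ≤ L * (|u - v| * fnorm d) * fnorm d :=
              mul_le_mul_of_nonneg_right h4 (fnorm_nonneg d)
          _ = L * fnorm d ^ 2 * |u - v| := by ring
      have habs : |φ' s - φ' t| ≤ L * fnorm d ^ 2 * |s - t| := by
        rw [abs_le]
        constructor
        · have := key t s
          rw [abs_sub_comm] at this
          linarith
        · exact key s t
      rw [Real.dist_eq] at *
      calc |φ' s - φ' t| ≤ L * fnorm d ^ 2 * |s - t| := habs
        _ < (L * fnorm d ^ 2 + 1) * (ε / (L * fnorm d ^ 2 + 1)) := by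
            have hpos : (0:ℝ) < L * fnorm d ^ 2 + 1 := by positivity
            rcases lt_or_ge 0 (|s - t|) with h | h
            · calc L * fnorm d ^ 2 * |s - t| < (L * fnorm d ^ 2 + 1) * |s - t| := by
                    nlinarith
                _ ≤ (L * fnorm d ^ 2 + 1) * (ε / (L * fnorm d ^ 2 + 1)) := by
                    exact mul_le_mul_of_nonneg_left hs.le hpos.le
            · have h1 : |s - t| = 0 := le_antisymm h (abs_nonneg _)
              rw [h1, mul_zero]
              positivity
        _ = ε := by field_simp
  -- fundamental theorem of calculus
  have hint : IntervalIntegrable φ' MeasureTheory.volume 0 1 :=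
    hφ'cont.intervalIntegrable 0 1
  have hftc : ∫ t in (0:ℝ)..1, φ' t = f (c 1) - f (c 0) :=
    intervalIntegral.integral_eq_sub_of_hasDerivAt (fun t _ => hderiv t) hint
  have hc0 : c 0 = Z := by simp [hc]
  have hc1 : c 1 = X := by simp [hc, hd]
  -- pointwise bound on φ'
  have hbound : ∀ t ∈ Set.Icc (0:ℝ) 1, φ' t ≤ φ' 0 + L * fnorm d ^ 2 * t := by
    intro t ht
    have h2 : finner (g (c t) - g (c 0)) d = φ' t - φ' 0 := by
      simp only [hφ', finner]
      rw [← Finset.sum_sub_distrib]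
      refine Finset.sum_congr rfl fun i _ => ?_
      rw [← Finset.sum_sub_distrib]
      refine Finset.sum_congr rfl fun j _ => ?_
      simp [Matrix.sub_apply]; ring
    have h3 : c t - c 0 = t • d := by simp [hc]
    have h4 : fnorm (g (c t) - g (c 0)) ≤ L * (t * fnorm d) := by
      have := hLip (c t) (c 0)
      rwa [h3, fnorm_smul, abs_of_nonneg ht.1] at this
    have h5 : φ' t - φ' 0 ≤ L * (t * fnorm d) * fnorm d := by
      rw [← h2]
      exact le_trans (finner_le_fnorm _ _)
        (mul_le_mul_of_nonneg_right h4 (fnorm_nonneg d))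
    nlinarith [fnorm_nonneg d]
  -- integral bound
  have hintbound : ∫ t in (0:ℝ)..1, φ' t ≤ φ' 0 + L * fnorm d ^ 2 / 2 := by
    have h1 : ∫ t in (0:ℝ)..1, φ' t ≤ ∫ t in (0:ℝ)..1, (φ' 0 + L * fnorm d ^ 2 * t) := by
      refine intervalIntegral.integral_mono_on zero_le_one hint ?_ hbound
      exact (continuous_const.add (continuous_const.mul continuous_id)).intervalIntegrable 0 1
    have hint2 : IntervalIntegrable (fun t : ℝ => L * fnorm d ^ 2 * t)
        MeasureTheory.volume 0 1 := by
      apply Continuous.intervalIntegrable; continuity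
    have h2 : ∫ t in (0:ℝ)..1, (φ' 0 + L * fnorm d ^ 2 * t) = φ' 0 + L * fnorm d ^ 2 / 2 := by
      rw [intervalIntegral.integral_add (intervalIntegrable_const) hint2,
        intervalIntegral.integral_const,
        intervalIntegral.integral_const_mul, integral_id]
      simp [smul_eq_mul]; ring
    linarith
  -- descent: f X ≤ f Z + φ' 0 + L/2 ‖d‖²
  have hdescent : f X ≤ f Z + φ' 0 + L * fnorm d ^ 2 / 2 := by
    have : f X - f Z = ∫ t in (0:ℝ)..1, φ' t := by rw [hftc, hc0, hc1]
    linarith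
  -- use hdec
  have hφ0 : φ' 0 = finner (g Z) d := by simp only [hφ']; rw [hc0]
  have hdec' : finner (g Z) d + η / 2 * fnorm d ^ 2 ≤ 0 := by
    have : fbar f g η Z Z = f Z := by
      simp [fbar, sub_self, finner_zero, fnorm_zero]
    rw [this, fbar, ← hd] at hdec
    linarith
  rw [hφ0] at hdescent
  linarith
end

section
/- Let c ∈ ℝⁿ, let s ∈ {0,1}ⁿ with supp(s) ≠ ∅, and set b := max(0, −c ⊙ s) ∈ ℝⁿ (entrywise maximum, ⊙ the entrywise product). Suppose b ≠ 0. Then for every x ∈ ℝⁿ with x ≥ 0, ‖x‖₂ = 1 and supp(x) ⊆ supp(s), one has ⟨x, c⟩ ≥ −‖b‖₂; moreover the vector x = b/‖b‖₂ satisfies all these constraints and attains ⟨x, c⟩ = −‖b‖₂. -/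
/-- For `c ∈ ℝⁿ`, `s ∈ {0,1}ⁿ` with nonempty support, and
`b := max(0, −c ⊙ s) ≠ 0`, every `x ≥ 0` with `‖x‖₂ = 1` and `supp(x) ⊆ supp(s)`
satisfies `⟨x, c⟩ ≥ −‖b‖₂`, and `x = b/‖b‖₂` is feasible and attains the bound. -/
theorem column_subproblem_nonzero_case
    {n : ℕ} (c s : Fin n → ℝ)
    (hs : ∀ i, s i = 0 ∨ s i = 1) (hsupp : ∃ i, s i ≠ 0)
    (b : Fin n → ℝ) (hb : b = fun i => max 0 (-(c i * s i))) (hbne : b ≠ 0) :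
    (∀ x : Fin n → ℝ, (∀ i, 0 ≤ x i) → Real.sqrt (∑ i, x i ^ 2) = 1 →
        (∀ i, x i ≠ 0 → s i ≠ 0) →
        -Real.sqrt (∑ i, b i ^ 2) ≤ ∑ i, x i * c i) ∧
    (∀ i, 0 ≤ b i / Real.sqrt (∑ i', b i' ^ 2)) ∧
    Real.sqrt (∑ i, (b i / Real.sqrt (∑ i', b i' ^ 2)) ^ 2) = 1 ∧
    (∀ i, b i / Real.sqrt (∑ i', b i' ^ 2) ≠ 0 → s i ≠ 0) ∧
    (∑ i, (b i / Real.sqrt (∑ i', b i' ^ 2)) * c i) = -Real.sqrt (∑ i, b i ^ 2) := by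
  have hbnn : ∀ i, 0 ≤ b i := by intro i; rw [hb]; exact le_max_left _ _
  have hbc : ∀ i, b i * c i = -(b i ^ 2) := by
    intro i
    rcases hs i with h | h
    · simp [hb, h]
    · rw [hb]; simp only [h, mul_one]
      rcases le_or_gt 0 (c i) with hc | hc
      · rw [max_eq_left (by linarith)]; ring
      · rw [max_eq_right (by linarith)]; ring
  have hB2pos : 0 < ∑ i, b i ^ 2 := by
    have hex : ∃ i, b i ≠ 0 := by
      by_contra h; push_neg at h; exact hbne (funext h)
    obtain ⟨i, hi⟩ := hex
    exact Finset.sum_pos' (fun j _ => sq_nonneg _)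
      ⟨i, Finset.mem_univ i, by positivity⟩
  set B := Real.sqrt (∑ i, b i ^ 2) with hBdef
  have hBpos : 0 < B := Real.sqrt_pos.mpr hB2pos
  have hBsq : B ^ 2 = ∑ i, b i ^ 2 := Real.sq_sqrt hB2pos.le
  refine ⟨?_, ?_, ?_, ?_, ?_⟩
  · intro x hx hxnorm hxsupp
    have hx2 : ∑ i, x i ^ 2 = 1 := by
      have := Real.sqrt_eq_one.mp hxnorm
      exact this
    have h1 : ∀ i, -(x i * b i) ≤ x i * c i := by
      intro i
      rcases eq_or_ne (x i) 0 with h | h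
      · simp [h]
      · have hsi : s i = 1 := (hs i).resolve_left (hxsupp i h)
        have hb' : -(c i) ≤ b i := by
          rw [hb]; simp only [hsi, mul_one]; exact le_max_right _ _
        nlinarith [hx i]
    have hcs : (∑ i, x i * b i) ^ 2 ≤ (∑ i, x i ^ 2) * ∑ i, b i ^ 2 :=
      Finset.sum_mul_sq_le_sq_mul_sq _ _ _
    have hxbnn : 0 ≤ ∑ i, x i * b i :=
      Finset.sum_nonneg fun i _ => mul_nonneg (hx i) (hbnn i)
    have h2 : ∑ i, x i * b i ≤ B := by nlinarith
    have h3 : -(∑ i, x i * b i) ≤ ∑ i, x i * c i := by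
      rw [← Finset.sum_neg_distrib]
      exact Finset.sum_le_sum fun i _ => h1 i
    linarith
  · intro i; exact div_nonneg (hbnn i) hBpos.le
  · have : ∑ i, (b i / B) ^ 2 = 1 := by
      have : ∑ i, (b i / B) ^ 2 = (∑ i, b i ^ 2) / B ^ 2 := by
        rw [Finset.sum_div]; exact Finset.sum_congr rfl fun i _ => by
          rw [div_pow]
      rw [this, hBsq, div_self (by positivity)]
    rw [this, Real.sqrt_one]
  · intro i hi
    intro hsi
    apply hi
    rw [hb]; simp [hsi]
  · have : ∑ i, (b i / B) * c i = (∑ i, b i * c i) / B := by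
      rw [Finset.sum_div]; exact Finset.sum_congr rfl fun i _ => by ring
    rw [this]
    have : ∑ i, b i * c i = -(B ^ 2) := by
      rw [hBsq, ← Finset.sum_neg_distrib]
      exact Finset.sum_congr rfl fun i _ => hbc i
    rw [this]
    field_simp
end

section
/- Let 1 ≤ p ≤ n, let f : ℝ^{n×p} → ℝ be differentiable, η > 0, Z ∈ O^{n,p}_+, and let S be a sign pattern. Set W := max(0, (ηZ − ∇f(Z)) ⊙ S) ∈ ℝ^{n×p} (entrywise), and for each column j define α_j := −‖W_{:,j}‖₂ if W_{:,j} ≠ 0, and α_j := min{[∇f(Z) − ηZ]_{i,j} : S_{i,j} = 1} otherwise. Define X̄ ∈ ℝ^{n×p} columnwise by X̄_{:,j} := W_{:,j}/‖W_{:,j}‖₂ if W_{:,j} ≠ 0, and X̄_{:,j} := e_{ī(j)} otherwise, where ī(j) ∈ {i : S_{i,j} = 1} attains the minimum defining α_j. Then X̄ ∈ O^{n,p}_+ with supp(X̄) ⊆ supp(S), and for every X ∈ O^{n,p}_+ with supp(X) ⊆ supp(S) one has f̄_Z(X) ≥ f̄_Z(X̄) = f(Z) − ⟨∇f(Z), Z⟩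 + ηp + Σ_{j=1}^{p} α_j. -/
open Matrix

attribute [local instance] Matrix.frobeniusNormedAddCommGroup Matrix.frobeniusNormedSpace

/-- Proposition `prop:supp`: the global minimizer of the proximal
linearization of `f` at `Z ∈ O^{n,p}_+` over the support set given by a sign
pattern `S` is `X̄` defined columnwise from `W = max(0, (ηZ − ∇f(Z)) ⊙ S)`,
with minimum value `f(Z) − ⟨∇f(Z), Z⟩ + ηp + Σ_j α_j`. -/
theorem proximal_linearization_fixed_support_global_min
    {n p : ℕ} (hp : 1 ≤ p) (hpn : p ≤ n)
    (f : Matrix (Fin n) (Fin p) ℝ → ℝ)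
    (g : Matrix (Fin n) (Fin p) ℝ → Matrix (Fin n) (Fin p) ℝ)
    (hgrad : IsGradient f g)
    (η : ℝ) (hη : 0 < η)
    (Z : Matrix (Fin n) (Fin p) ℝ)
    (hZ : Zᵀ * Z = 1 ∧ ∀ i j, 0 ≤ Z i j)
    (S : Matrix (Fin n) (Fin p) ℝ)
    (hS01 : ∀ i j, S i j = 0 ∨ S i j = 1)
    (hSrow : ∀ i j j', S i j = 1 → S i j' = 1 → j = j')
    (hScol : ∀ j, ∃ i, S i j = 1)
    (W : Matrix (Fin n) (Fin p) ℝ)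
    (hW : ∀ i j, W i j = max 0 ((η * Z i j - g Z i j) * S i j))
    (ibar : Fin p → Fin n)
    (hibar : ∀ j, (∀ i, W i j = 0) → S (ibar j) j = 1 ∧
        ∀ i, S i j = 1 → g Z (ibar j) j - η * Z (ibar j) j ≤ g Z i j - η * Z i j)
    (α : Fin p → ℝ)
    (hα1 : ∀ j, ¬ (∀ i, W i j = 0) → α j = -Real.sqrt (∑ i, W i j ^ 2))
    (hα0 : ∀ j, (∀ i, W i j = 0) → α j = g Z (ibar j) j - η * Z (ibar j) j)
    (Xb : Matrix (Fin n) (Fin p) ℝ)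
    (hXb1 : ∀ j, ¬ (∀ i, W i j = 0) →
        ∀ i, Xb i j = W i j / Real.sqrt (∑ i', W i' j ^ 2))
    (hXb0 : ∀ j, (∀ i, W i j = 0) → ∀ i, Xb i j = if i = ibar j then 1 else 0) :
    (Xbᵀ * Xb = 1 ∧ (∀ i j, 0 ≤ Xb i j) ∧ (∀ i j, Xb i j ≠ 0 → S i j ≠ 0)) ∧
    fbar f g η Z Xb = f Z - finner (g Z) Z + η * (p : ℝ) + ∑ j, α j ∧
    (∀ X : Matrix (Fin n) (Fin p) ℝ, Xᵀ * X = 1 → (∀ i j, 0 ≤ X i j) →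
        (∀ i j, X i j ≠ 0 → S i j ≠ 0) → fbar f g η Z Xb ≤ fbar f g η Z X) := by

  obtain ⟨hZorth, hZpos⟩ := hZ
  set C : Matrix (Fin n) (Fin p) ℝ := fun i j => g Z i j - η * Z i j with hCdef
  have hCapp : ∀ i j, C i j = g Z i j - η * Z i j := fun i j => rfl
  have hWnn : ∀ i j, 0 ≤ W i j := fun i j => by rw [hW]; exact le_max_left _ _
  have hWS : ∀ i j, W i j ≠ 0 → S i j = 1 := by
    intro i j h
    rcases hS01 i j with h0 | h1
    · exact absurd (by rw [hW, h0]; simp) h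
    · exact h1
  have hWC : ∀ i j, S i j = 1 → W i j = max 0 (-(C i j)) := by
    intro i j h1
    have he : (η * Z i j - g Z i j) * S i j = -(C i j) := by rw [h1, hCapp]; ring
    rw [hW, he]
  -- columns of orthonormal matrices are unit vectors
  have colnorm : ∀ (X : Matrix (Fin n) (Fin p) ℝ), Xᵀ * X = 1 → ∀ j, ∑ i, X i j ^ 2 = 1 := by
    intro X hX j
    have h := congrFun (congrFun hX j) j
    simp only [Matrix.mul_apply, Matrix.transpose_apply, Matrix.one_apply_eq] at h
    calc ∑ i, X i j ^ 2 = ∑ i, X i j * X i j := by simp [pow_two]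
      _ = 1 := h
  -- key reduction of fbar to a linear function
  have key : ∀ X : Matrix (Fin n) (Fin p) ℝ, Xᵀ * X = 1 →
      fbar f g η Z X = f Z - finner (g Z) Z + η * p + ∑ j, ∑ i, C i j * X i j := by
    intro X hX
    have hXs : ∑ i, ∑ j, X i j ^ 2 = p := by
      rw [Finset.sum_comm]; simp [colnorm X hX]
    have hZs : ∑ i, ∑ j, Z i j ^ 2 = p := by
      rw [Finset.sum_comm]; simp [colnorm Z hZorth]
    have hfn : fnorm (X - Z) ^ 2 = ∑ i, ∑ j, (X i j - Z i j) ^ 2 := by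
      rw [fnorm, Real.sq_sqrt (by positivity)]
      simp [Matrix.sub_apply]
    have expand : ∑ i, ∑ j, (X i j - Z i j) ^ 2
        = (∑ i, ∑ j, X i j ^ 2) - 2 * (∑ i, ∑ j, X i j * Z i j) + ∑ i, ∑ j, Z i j ^ 2 := by
      simp_rw [sub_sq, Finset.sum_add_distrib, Finset.sum_sub_distrib, Finset.mul_sum,
        mul_assoc]
    have hfin : finner (g Z) (X - Z)
        = (∑ i, ∑ j, g Z i j * X i j) - finner (g Z) Z := by
      rw [finner, finner, ← Finset.sum_sub_distrib]
      refine Finset.sum_congr rfl fun i _ => ?_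
      rw [← Finset.sum_sub_distrib]
      refine Finset.sum_congr rfl fun j _ => ?_
      simp [Matrix.sub_apply]; ring
    have hCX : ∑ j, ∑ i, C i j * X i j
        = (∑ i, ∑ j, g Z i j * X i j) - η * (∑ i, ∑ j, X i j * Z i j) := by
      rw [Finset.sum_comm, Finset.mul_sum, ← Finset.sum_sub_distrib]
      refine Finset.sum_congr rfl fun i _ => ?_
      rw [Finset.mul_sum, ← Finset.sum_sub_distrib]
      refine Finset.sum_congr rfl fun j _ => ?_
      rw [hCapp]; ring
    rw [fbar, hfn, expand, hXs, hZs, hfin, hCX]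
    ring
  -- nonnegativity of Xb
  have hXbnn : ∀ i j, 0 ≤ Xb i j := by
    intro i j
    by_cases hz : ∀ i', W i' j = 0
    · rw [hXb0 j hz i]; split <;> norm_num
    · rw [hXb1 j hz i]; exact div_nonneg (hWnn i j) (Real.sqrt_nonneg _)
  -- support of Xb
  have hXbS : ∀ i j, Xb i j ≠ 0 → S i j ≠ 0 := by
    intro i j h
    by_cases hz : ∀ i', W i' j = 0
    · rw [hXb0 j hz i] at h
      have hi : i = ibar j := by by_contra hne; simp [hne] at h
      rw [hi, (hibar j hz).1]; norm_num
    · rw [hXb1 j hz i] at h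
      have hWij : W i j ≠ 0 := by intro h0; rw [h0] at h; simp at h
      rw [hWS i j hWij]; norm_num
  -- positivity of column sums of squares of W in the nonzero case
  have hspos : ∀ j, ¬ (∀ i, W i j = 0) → 0 < ∑ i, W i j ^ 2 := by
    intro j hz
    push_neg at hz
    obtain ⟨i0, hi0⟩ := hz
    exact Finset.sum_pos' (fun i _ => sq_nonneg _) ⟨i0, Finset.mem_univ _, by positivity⟩
  -- Xb columns are unit vectors
  have hXbcol : ∀ j, ∑ i, Xb i j ^ 2 = 1 := by
    intro j
    by_cases hz : ∀ i', W i' j = 0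
    · simp [hXb0 j hz, ite_pow]
    · have hs := hspos j hz
      simp only [hXb1 j hz, div_pow, Real.sq_sqrt hs.le]
      rw [← Finset.sum_div, div_self hs.ne']
  -- orthonormality of Xb
  have hXborth : Xbᵀ * Xb = 1 := by
    ext j j'
    rw [Matrix.mul_apply]
    simp only [Matrix.transpose_apply]
    by_cases hjj : j = j'
    · subst hjj
      rw [Matrix.one_apply_eq]
      calc ∑ i, Xb i j * Xb i j = ∑ i, Xb i j ^ 2 := by simp [pow_two]
        _ = 1 := hXbcol j
    · rw [Matrix.one_apply_ne hjj]
      refine Finset.sum_eq_zero fun i _ => ?_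
      by_cases h1 : Xb i j = 0
      · simp [h1]
      by_cases h2 : Xb i j' = 0
      · simp [h2]
      exact absurd (hSrow i j j' ((hS01 i j).resolve_left (hXbS i j h1))
        ((hS01 i j').resolve_left (hXbS i j' h2))) hjj
  -- column value at Xb equals α
  have colXb : ∀ j, ∑ i, C i j * Xb i j = α j := by
    intro j
    by_cases hz : ∀ i', W i' j = 0
    · rw [hα0 j hz]
      simp only [hXb0 j hz, mul_ite, mul_one, mul_zero]
      rw [Finset.sum_ite_eq' Finset.univ (ibar j) (fun i => C i j),
        if_pos (Finset.mem_univ _)]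
    · have hs := hspos j hz
      rw [hα1 j hz]
      simp only [hXb1 j hz]
      have hCW : ∀ i, C i j * W i j = -(W i j ^ 2) := by
        intro i
        by_cases hw : W i j = 0
        · simp [hw]
        · have hS1 := hWS i j hw
          have hWi := hWC i j hS1
          have hCneg : W i j = -(C i j) := by
            rcases le_total (-(C i j)) 0 with h | h
            · rw [hWi, max_eq_left h] at hw; exact absurd rfl hw
            · rw [hWi, max_eq_right h]
          rw [hCneg]; ring
      calc ∑ i, C i j * (W i j / Real.sqrt (∑ i', W i' j ^ 2))
          = (∑ i, C i j * W i j) / Real.sqrt (∑ i', W i' j ^ 2) := by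
            simp_rw [← mul_div_assoc]; rw [← Finset.sum_div]
        _ = (-(∑ i', W i' j ^ 2)) / Real.sqrt (∑ i', W i' j ^ 2) := by
            rw [← Finset.sum_neg_distrib]
            exact congrArg (· / _) (Finset.sum_congr rfl fun i _ => hCW i)
        _ = -Real.sqrt (∑ i', W i' j ^ 2) := by rw [neg_div, Real.div_sqrt]
  -- lower bound on column values for any feasible X
  have collb : ∀ (X : Matrix (Fin n) (Fin p) ℝ), Xᵀ * X = 1 → (∀ i j, 0 ≤ X i j) →
      (∀ i j, X i j ≠ 0 → S i j ≠ 0) → ∀ j, α j ≤ ∑ i, C i j * X i j := by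
    intro X hXo hXnn hXS j
    have hx2 : ∑ i, X i j ^ 2 = 1 := colnorm X hXo j
    have hXS1 : ∀ i, X i j ≠ 0 → S i j = 1 := fun i h => (hS01 i j).resolve_left (hXS i j h)
    by_cases hz : ∀ i', W i' j = 0
    · rw [hα0 j hz]
      have hab : g Z (ibar j) j - η * Z (ibar j) j = C (ibar j) j := (hCapp _ _).symm
      rw [hab]
      have ha0 : 0 ≤ C (ibar j) j := by
        have hWi := hWC (ibar j) j (hibar j hz).1
        rw [hz (ibar j)] at hWi
        by_contra hlt
        push_neg at hlt
        rw [max_eq_right (by linarith)] at hWi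
        linarith
      have hterm : ∀ i, C (ibar j) j * X i j ≤ C i j * X i j := by
        intro i
        by_cases hxi : X i j = 0
        · simp [hxi]
        · have hle := (hibar j hz).2 i (hXS1 i hxi)
          rw [← hCapp, ← hCapp] at hle
          exact mul_le_mul_of_nonneg_right hle (hXnn i j)
      have hsum1 : 1 ≤ ∑ i, X i j := by
        rw [← hx2]
        refine Finset.sum_le_sum fun i _ => ?_
        have h1 : X i j ^ 2 ≤ 1 := by
          rw [← hx2]
          exact Finset.single_le_sum (f := fun i => X i j ^ 2)
            (fun i _ => sq_nonneg _) (Finset.mem_univ i)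
        nlinarith [hXnn i j]
      calc C (ibar j) j = C (ibar j) j * 1 := (mul_one _).symm
        _ ≤ C (ibar j) j * ∑ i, X i j := mul_le_mul_of_nonneg_left hsum1 ha0
        _ = ∑ i, C (ibar j) j * X i j := Finset.mul_sum _ _ _
        _ ≤ ∑ i, C i j * X i j := Finset.sum_le_sum fun i _ => hterm i
    · rw [hα1 j hz]
      have hs := hspos j hz
      have h1 : ∑ i, W i j * X i j ≤ Real.sqrt (∑ i, W i j ^ 2) := by
        have hcs := Finset.sum_mul_sq_le_sq_mul_sq Finset.univ (fun i => W i j) (fun i => X i j)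
        rw [hx2, mul_one] at hcs
        have hnn : 0 ≤ ∑ i, W i j * X i j :=
          Finset.sum_nonneg fun i _ => mul_nonneg (hWnn i j) (hXnn i j)
        exact (Real.le_sqrt hnn hs.le).mpr hcs
      have h2 : ∀ i, -(W i j * X i j) ≤ C i j * X i j := by
        intro i
        by_cases hxi : X i j = 0
        · simp [hxi]
        · have hWi := hWC i j (hXS1 i hxi)
          have hle : -(W i j) ≤ C i j := by
            rcases le_total (-(C i j)) 0 with h | h
            · rw [hWi, max_eq_left h]; linarith
            · rw [hWi, max_eq_right h]; linarith
          nlinarith [hXnn i j]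
      calc -Real.sqrt (∑ i, W i j ^ 2) ≤ -∑ i, W i j * X i j := neg_le_neg h1
        _ = ∑ i, -(W i j * X i j) := by rw [Finset.sum_neg_distrib]
        _ ≤ ∑ i, C i j * X i j := Finset.sum_le_sum fun i _ => h2 i
  refine ⟨⟨hXborth, hXbnn, hXbS⟩, ?_, ?_⟩
  · rw [key Xb hXborth]
    congr 1
    exact Finset.sum_congr rfl fun j _ => colXb j
  · intro X hXo hXnn hXS
    rw [key Xb hXborth, key X hXo]
    have h1 : ∑ j, ∑ i, C i j * Xb i j = ∑ j, α j :=
      Finset.sum_congr rfl fun j _ => colXb j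
    have h2 : ∑ j, α j ≤ ∑ j, ∑ i, C i j * X i j :=
      Finset.sum_le_sum fun j _ => collb X hXo hXnn hXS j
    rw [h1]
    linarith
end

section
/- Let 1 ≤ p ≤ n, let f : ℝ^{n×p} → ℝ be differentiable, η > 0, X ∈ O^{n,p}_+, and let S be a sign pattern. Set W := max(0, (ηX − ∇f(X)) ⊙ S) (entrywise) and define Y ∈ ℝ^{n×p} columnwise by Y_{:,j} := W_{:,j}/‖W_{:,j}‖₂ if W_{:,j} ≠ 0, and Y_{:,j} := e_{ī(j)} otherwise, where ī(j) ∈ {i : S_{i,j} = 1} minimizes i ↦ [∇f(X) − ηX]_{i,j} over {i : S_{i,j} = 1}. Then for every (i,j) ∈ supp(Y), [ηX − ∇f(X)]_{i,j} − (⟨Y_{:,j}, [ηX − ∇f(X)]_{:,j}⟩)·Y_{i,j} = 0. -/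
open Matrix

attribute [local instance] Matrix.frobeniusNormedAddCommGroup Matrix.frobeniusNormedSpace

/-- relation `eq:sc-yk`: if `Y` is obtained columnwise from
`W = max(0, (ηX − ∇f(X)) ⊙ S)` (normalized column if nonzero, unit vector at the
minimizing index otherwise), then for every `(i,j) ∈ supp(Y)`,
`[ηX − ∇f(X)]_{i,j} − (⟨Y_{:,j}, [ηX − ∇f(X)]_{:,j}⟩)·Y_{i,j} = 0`. -/
theorem stationarity_relation_on_support
    {n p : ℕ} (hp : 1 ≤ p) (hpn : p ≤ n)
    (f : Matrix (Fin n) (Fin p) ℝ → ℝ)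
    (g : Matrix (Fin n) (Fin p) ℝ → Matrix (Fin n) (Fin p) ℝ)
    (hgrad : IsGradient f g)
    (η : ℝ) (hη : 0 < η)
    (X : Matrix (Fin n) (Fin p) ℝ)
    (hX : Xᵀ * X = 1 ∧ ∀ i j, 0 ≤ X i j)
    (S : Matrix (Fin n) (Fin p) ℝ)
    (hS01 : ∀ i j, S i j = 0 ∨ S i j = 1)
    (hSrow : ∀ i j j', S i j = 1 → S i j' = 1 → j = j')
    (hScol : ∀ j, ∃ i, S i j = 1)
    (W : Matrix (Fin n) (Fin p) ℝ)
    (hW : ∀ i j, W i j = max 0 ((η * X i j - g X i j) * S i j))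
    (ibar : Fin p → Fin n)
    (hibar : ∀ j, (∀ i, W i j = 0) → S (ibar j) j = 1 ∧
        ∀ i, S i j = 1 → g X (ibar j) j - η * X (ibar j) j ≤ g X i j - η * X i j)
    (Y : Matrix (Fin n) (Fin p) ℝ)
    (hY1 : ∀ j, ¬ (∀ i, W i j = 0) →
        ∀ i, Y i j = W i j / Real.sqrt (∑ i', W i' j ^ 2))
    (hY0 : ∀ j, (∀ i, W i j = 0) → ∀ i, Y i j = if i = ibar j then 1 else 0) :
    ∀ i j, Y i j ≠ 0 →
      (η * X i j - g X i j) - (∑ i', Y i' j * (η * X i' j - g X i' j)) * Y i j = 0 := by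

  intro i j hYij
  by_cases hall : ∀ i, W i j = 0
  · have hY := hY0 j hall
    have hi : i = ibar j := by
      by_contra h
      simp [hY i, h] at hYij
    subst hi
    have hsum : (∑ i', Y i' j * (η * X i' j - g X i' j))
        = η * X (ibar j) j - g X (ibar j) j := by
      rw [Finset.sum_eq_single (ibar j)]
      · simp [hY]
      · intro b _ hb; simp [hY b, hb]
      · simp
    rw [hsum, hY (ibar j)]
    simp
  · have hY := hY1 j hall
    set r := Real.sqrt (∑ i', W i' j ^ 2) with hr
    have hpos : 0 < ∑ i', W i' j ^ 2 := by
      push_neg at hall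
      obtain ⟨i0, hi0⟩ := hall
      exact Finset.sum_pos' (fun _ _ => sq_nonneg _)
        ⟨i0, Finset.mem_univ _, by positivity⟩
    have hrpos : 0 < r := Real.sqrt_pos.mpr hpos
    have hkey : ∀ i', W i' j * (η * X i' j - g X i' j) = W i' j ^ 2 := by
      intro i'
      by_cases h0 : W i' j = 0
      · simp [h0]
      · have hWi := hW i' j
        have hmax : 0 < (η * X i' j - g X i' j) * S i' j := by
          rcases le_or_gt ((η * X i' j - g X i' j) * S i' j) 0 with h | h
          · exact absurd (by rw [hWi, max_eq_left h]) h0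
          · exact h
        have hS : S i' j = 1 := by
          rcases hS01 i' j with h | h
          · rw [h, mul_zero] at hmax; exact absurd hmax (lt_irrefl 0)
          · exact h
        have hWeq : W i' j = η * X i' j - g X i' j := by
          rw [hWi, hS, mul_one]
          exact max_eq_right (le_of_lt (by simpa [hS] using hmax))
        rw [hWeq]; ring
    have hsum : (∑ i', Y i' j * (η * X i' j - g X i' j)) = r := by
      calc (∑ i', Y i' j * (η * X i' j - g X i' j))
          = ∑ i', W i' j ^ 2 / r := by
            apply Finset.sum_congr rfl
            intro i' _
            rw [hY i', div_mul_eq_mul_div, hkey]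
        _ = (∑ i', W i' j ^ 2) / r := by rw [Finset.sum_div]
        _ = r := by rw [hr, Real.div_sqrt]
    have hW0 : W i j ≠ 0 := by
      intro h; rw [hY i, h, zero_div] at hYij; exact hYij rfl
    have ha : η * X i j - g X i j = W i j :=
      mul_left_cancel₀ hW0 (by rw [hkey i, sq])
    rw [hsum, hY i, ha]
    field_simp
    ring
end

section
/- Let f : ℝ^{n×p} → ℝ be differentiable, L ≥ 0, η > 0, and let X, Y ∈ O^{n,p}_+ satisfy ‖∇f(Y) − ∇f(X)‖_F ≤ L‖Y − X‖_F. Suppose that at some index pair (i,j) with Y_{i,j} ≠ 0 the condition [ηX − ∇f(X)]_{i,j} − (⟨Y_{:,j}, [ηX − ∇f(X)]_{:,j}⟩)·Y_{i,j} = 0 holds. Then |[grad f(Y)]_{i,j}| ≤ 2(η + L)·‖Y − X‖_F, where [grad f(Y)]_{i,j} = [∇f(Y)]_{i,j} − (⟨Y_{:,j}, [∇f(Y)]_{:,j}⟩)·Y_{i,j}. -/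
open Matrix

attribute [local instance] Matrix.frobeniusNormedAddCommGroup Matrix.frobeniusNormedSpace

lemma abs_entry_le_fnorm {n p : ℕ} (A : Matrix (Fin n) (Fin p) ℝ) (i : Fin n) (j : Fin p) :
    |A i j| ≤ fnorm A := by
  rw [← Real.sqrt_sq_eq_abs]
  apply Real.sqrt_le_sqrt
  have h1 : A i j ^ 2 ≤ ∑ j', A i j' ^ 2 :=
    Finset.single_le_sum (f := fun j' => A i j' ^ 2) (fun _ _ => sq_nonneg _) (Finset.mem_univ j)
  exact h1.trans (Finset.single_le_sum (f := fun i' => ∑ j', A i' j' ^ 2)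
    (fun _ _ => Finset.sum_nonneg fun _ _ => sq_nonneg _) (Finset.mem_univ i))

lemma inner_col_le {n p : ℕ} (Y A : Matrix (Fin n) (Fin p) ℝ) (j : Fin p)
    (hY : ∑ i', Y i' j ^ 2 = 1) :
    |∑ i', Y i' j * A i' j| ≤ fnorm A := by
  rw [← Real.sqrt_sq_eq_abs]
  apply Real.sqrt_le_sqrt
  have h := Finset.sum_mul_sq_le_sq_mul_sq Finset.univ (fun i' => Y i' j) (fun i' => A i' j)
  rw [hY, one_mul] at h
  refine h.trans ?_
  exact Finset.sum_le_sum fun i' _ =>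
    Finset.single_le_sum (f := fun j' => A i' j' ^ 2) (fun _ _ => sq_nonneg _) (Finset.mem_univ j)

/-- bound `eq:supp-yk`: if `‖∇f(Y) − ∇f(X)‖_F ≤ L‖Y − X‖_F` and at
`(i,j)` with `Y_{i,j} ≠ 0` the relation
`[ηX − ∇f(X)]_{i,j} − ⟨Y_{:,j}, [ηX − ∇f(X)]_{:,j}⟩·Y_{i,j} = 0` holds, then
`|[grad f(Y)]_{i,j}| ≤ 2(η + L)‖Y − X‖_F`. -/
theorem riemannian_gradient_entry_bound
    {n p : ℕ}
    (f : Matrix (Fin n) (Fin p) ℝ → ℝ)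
    (g : Matrix (Fin n) (Fin p) ℝ → Matrix (Fin n) (Fin p) ℝ)
    (hgrad : IsGradient f g)
    (L η : ℝ) (hL : 0 ≤ L) (hη : 0 < η)
    (X Y : Matrix (Fin n) (Fin p) ℝ)
    (hX : Xᵀ * X = 1 ∧ ∀ i j, 0 ≤ X i j)
    (hY : Yᵀ * Y = 1 ∧ ∀ i j, 0 ≤ Y i j)
    (hLip : fnorm (g Y - g X) ≤ L * fnorm (Y - X))
    (i : Fin n) (j : Fin p) (hYij : Y i j ≠ 0)
    (hcond : (η * X i j - g X i j) - (∑ i', Y i' j * (η * X i' j - g X i' j)) * Y i j = 0) :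
    |g Y i j - (∑ i', Y i' j * g Y i' j) * Y i j| ≤ 2 * (η + L) * fnorm (Y - X) := by
  set F := fnorm (Y - X) with hF
  -- column of Y is unit
  have hYcol : ∑ i', Y i' j ^ 2 = 1 := by
    have := congrFun (congrFun hY.1 j) j
    simp [Matrix.mul_apply, Matrix.transpose_apply, Matrix.one_apply] at this
    rw [← this]
    exact Finset.sum_congr rfl fun i' _ => (sq (Y i' j)).symm ▸ (pow_two (Y i' j))
  have hYij1 : |Y i j| ≤ 1 := by
    have h1 : Y i j ^ 2 ≤ 1 := by
      rw [← hYcol]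
      exact Finset.single_le_sum (f := fun i' => Y i' j ^ 2) (fun _ _ => sq_nonneg _)
        (Finset.mem_univ i)
    nlinarith [abs_nonneg (Y i j), sq_abs (Y i j)]
  -- sums split
  have hsD : ∑ i', Y i' j * (g Y - g X) i' j
      = (∑ i', Y i' j * g Y i' j) - (∑ i', Y i' j * g X i' j) := by
    rw [← Finset.sum_sub_distrib]
    exact Finset.sum_congr rfl fun i' _ => by simp [Matrix.sub_apply]; ring
  have hsE : ∑ i', Y i' j * (Y - X) i' j
      = 1 - (∑ i', Y i' j * X i' j) := by
    rw [← hYcol, ← Finset.sum_sub_distrib]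
    exact Finset.sum_congr rfl fun i' _ => by simp [Matrix.sub_apply]; ring
  have hsC : ∑ i', Y i' j * (η * X i' j - g X i' j)
      = η * (∑ i', Y i' j * X i' j) - (∑ i', Y i' j * g X i' j) := by
    rw [Finset.mul_sum, ← Finset.sum_sub_distrib]
    exact Finset.sum_congr rfl fun i' _ => by ring
  rw [hsC] at hcond
  -- key identity
  have key : g Y i j - (∑ i', Y i' j * g Y i' j) * Y i j
      = ((g Y - g X) i j - (∑ i', Y i' j * (g Y - g X) i' j) * Y i j)
        - η * ((Y - X) i j - (∑ i', Y i' j * (Y - X) i' j) * Y i j) := by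
    rw [hsD, hsE]
    simp only [Matrix.sub_apply]
    linear_combination -hcond
  rw [key]
  -- bounds
  have hD1 : |(g Y - g X) i j| ≤ L * F :=
    (abs_entry_le_fnorm _ i j).trans hLip
  have hD2 : |∑ i', Y i' j * (g Y - g X) i' j| ≤ L * F :=
    (inner_col_le Y _ j hYcol).trans hLip
  have hE1 : |(Y - X) i j| ≤ F := abs_entry_le_fnorm _ i j
  have hE2 : |∑ i', Y i' j * (Y - X) i' j| ≤ F := inner_col_le Y _ j hYcol
  have habs2 : |(∑ i', Y i' j * (g Y - g X) i' j) * Y i j| ≤ L * F := by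
    rw [abs_mul]
    calc |∑ i', Y i' j * (g Y - g X) i' j| * |Y i j|
        ≤ (L * F) * 1 := mul_le_mul hD2 hYij1 (abs_nonneg _) (mul_nonneg hL (Real.sqrt_nonneg _))
      _ = L * F := mul_one _
  have habs4 : |(∑ i', Y i' j * (Y - X) i' j) * Y i j| ≤ F := by
    rw [abs_mul]
    calc |∑ i', Y i' j * (Y - X) i' j| * |Y i j|
        ≤ F * 1 := mul_le_mul hE2 hYij1 (abs_nonneg _) (Real.sqrt_nonneg _)
      _ = F := mul_one _
  calc |((g Y - g X) i j - (∑ i', Y i' j * (g Y - g X) i' j) * Y i j)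
        - η * ((Y - X) i j - (∑ i', Y i' j * (Y - X) i' j) * Y i j)|
      ≤ |(g Y - g X) i j - (∑ i', Y i' j * (g Y - g X) i' j) * Y i j|
        + |η * ((Y - X) i j - (∑ i', Y i' j * (Y - X) i' j) * Y i j)| := abs_sub _ _
    _ ≤ (|(g Y - g X) i j| + |(∑ i', Y i' j * (g Y - g X) i' j) * Y i j|)
        + |η| * (|(Y - X) i j| + |(∑ i', Y i' j * (Y - X) i' j) * Y i j|) := by
        rw [abs_mul]
        gcongr <;> [exact abs_sub _ _; exact abs_sub _ _]
    _ ≤ (L * F + L * F) + η * (F + F) := by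
        rw [abs_of_pos hη]
        gcongr
    _ = 2 * (η + L) * F := by ring
end

section
/- Let 1 ≤ p ≤ n, let f : ℝ^{n×p} → ℝ be differentiable, η > 0, and let Y ∈ O^{n,p}_+ with ‖∇f(Y)‖_F ≤ C for some C > 0. Let i be an index with the i-th row of Y identically zero, and let ĵ minimize j ↦ [∇f(Y)]_{i,j} over j ∈ {1,…,p}. Let S be a sign pattern with S_{i,ĵ} = 1, set Ŵ := max(0, (ηY − ∇f(Y)) ⊙ S) (entrywise), and let X' ∈ ℝ^{n×p} be defined columnwise by X'_{:,j} := Ŵ_{:,j}/‖Ŵ_{:,j}‖₂ if Ŵ_{:,j} ≠ 0 and X'_{:,j} := e_{ī(j)} otherwise, where ī(j) ∈ {l : S_{l,j} = 1} minimizes l ↦ [∇f(Y) − ηY]_{l,j} over {l : S_{l,j} = 1}. Then for every j ∈ {1,…,p}, max{0, −[∇f(Y)]_{i,j}} ≤ (η + C)·‖X' − Y‖_F. -/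
open Matrix

attribute [local instance] Matrix.frobeniusNormedAddCommGroup Matrix.frobeniusNormedSpace

lemma col_sqrt_le_fnorm {n p : ℕ} (A : Matrix (Fin n) (Fin p) ℝ) (j : Fin p) :
    Real.sqrt (∑ l, (A l j) ^ 2) ≤ fnorm A := by
  apply Real.sqrt_le_sqrt
  apply Finset.sum_le_sum
  intro l _
  exact Finset.single_le_sum (fun j' _ => sq_nonneg (A l j')) (Finset.mem_univ j)

/-- bound `eq:zrow-yk`: for a zero row `i` of `Y ∈ O^{n,p}_+` with
`‖∇f(Y)‖_F ≤ C`, if `ĵ` minimizes `j ↦ [∇f(Y)]_{i,j}`, `S` is a sign pattern with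
`S_{i,ĵ} = 1`, and `X'` is obtained columnwise from `Ŵ = max(0, (ηY − ∇f(Y)) ⊙ S)`,
then `max{0, −[∇f(Y)]_{i,j}} ≤ (η + C)‖X' − Y‖_F` for every `j`. -/
theorem zero_row_violation_bound
    {n p : ℕ} (hp : 1 ≤ p) (hpn : p ≤ n)
    (f : Matrix (Fin n) (Fin p) ℝ → ℝ)
    (g : Matrix (Fin n) (Fin p) ℝ → Matrix (Fin n) (Fin p) ℝ)
    (hgrad : IsGradient f g)
    (η : ℝ) (hη : 0 < η)
    (Y : Matrix (Fin n) (Fin p) ℝ)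
    (hY : Yᵀ * Y = 1 ∧ ∀ i j, 0 ≤ Y i j)
    (C : ℝ) (hC : 0 < C) (hgY : fnorm (g Y) ≤ C)
    (i : Fin n) (hzrow : ∀ j, Y i j = 0)
    (jhat : Fin p) (hjhat : ∀ j, g Y i jhat ≤ g Y i j)
    (S : Matrix (Fin n) (Fin p) ℝ)
    (hS01 : ∀ l j, S l j = 0 ∨ S l j = 1)
    (hSrow : ∀ l j j', S l j = 1 → S l j' = 1 → j = j')
    (hScol : ∀ j, ∃ l, S l j = 1)
    (hSi : S i jhat = 1)
    (W : Matrix (Fin n) (Fin p) ℝ)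
    (hW : ∀ l j, W l j = max 0 ((η * Y l j - g Y l j) * S l j))
    (ibar : Fin p → Fin n)
    (hibar : ∀ j, (∀ l, W l j = 0) → S (ibar j) j = 1 ∧
        ∀ l, S l j = 1 → g Y (ibar j) j - η * Y (ibar j) j ≤ g Y l j - η * Y l j)
    (X' : Matrix (Fin n) (Fin p) ℝ)
    (hX'1 : ∀ j, ¬ (∀ l, W l j = 0) →
        ∀ l, X' l j = W l j / Real.sqrt (∑ l', W l' j ^ 2))
    (hX'0 : ∀ j, (∀ l, W l j = 0) → ∀ l, X' l j = if l = ibar j then 1 else 0) :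
    ∀ j, max 0 (-(g Y i j)) ≤ (η + C) * fnorm (X' - Y) := by
  intro j
  have hfn : 0 ≤ fnorm (X' - Y) := Real.sqrt_nonneg _
  have hηC : 0 ≤ η + C := by linarith
  have hred : max 0 (-(g Y i j)) ≤ max 0 (-(g Y i jhat)) :=
    max_le_max le_rfl (by linarith [hjhat j])
  refine hred.trans ?_
  by_cases hpos : 0 ≤ g Y i jhat
  · rw [max_eq_left (by linarith)]
    exact mul_nonneg hηC hfn
  push_neg at hpos
  rw [max_eq_right (by linarith)]
  -- W i jhat = -(g Y i jhat) > 0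
  have hWi : W i jhat = -(g Y i jhat) := by
    rw [hW, hzrow, hSi]
    rw [max_eq_right (by linarith)]
    ring
  have hnz : ¬ (∀ l, W l jhat = 0) := by
    intro h
    have := h i
    rw [hWi] at this
    linarith
  set q := Real.sqrt (∑ l', W l' jhat ^ 2) with hq
  have hqpos : 0 < q := by
    apply Real.sqrt_pos.mpr
    have h1 : (W i jhat) ^ 2 ≤ ∑ l', W l' jhat ^ 2 :=
      Finset.single_le_sum (f := fun l' => W l' jhat ^ 2) (fun l _ => sq_nonneg _)
        (Finset.mem_univ i)
    have h2 : 0 < (W i jhat) ^ 2 := by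
      rw [hWi]
      exact pow_pos (by linarith) 2
    linarith
  -- bound q ≤ η + C
  have hYcol : ∑ l, (Y l jhat) ^ 2 = 1 := by
    have h := congrFun (congrFun hY.1 jhat) jhat
    simp only [Matrix.mul_apply, Matrix.transpose_apply, Matrix.one_apply_eq] at h
    rw [← h]
    exact Finset.sum_congr rfl fun l _ => pow_two (Y l jhat)
  have hsum : ∑ l', W l' jhat ^ 2 ≤ ∑ l', (η * Y l' jhat - g Y l' jhat) ^ 2 := by
    apply Finset.sum_le_sum
    intro l _
    rw [hW]
    rcases hS01 l jhat with h | h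
    · simp only [h, mul_zero, max_self]
      simpa using sq_nonneg (η * Y l jhat - g Y l jhat)
    · rw [h, mul_one]
      have h1 : max 0 (η * Y l jhat - g Y l jhat) ≤ |η * Y l jhat - g Y l jhat| :=
        max_le (abs_nonneg _) (le_abs_self _)
      have h2 : -|η * Y l jhat - g Y l jhat| ≤ max 0 (η * Y l jhat - g Y l jhat) := by
        have := le_max_left 0 (η * Y l jhat - g Y l jhat)
        have := abs_nonneg (η * Y l jhat - g Y l jhat)
        linarith
      calc max 0 (η * Y l jhat - g Y l jhat) ^ 2 ≤ |η * Y l jhat - g Y l jhat| ^ 2 :=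
            sq_le_sq' h2 h1
        _ = (η * Y l jhat - g Y l jhat) ^ 2 := sq_abs _
  have hqle : q ≤ η + C := by
    set u : EuclideanSpace ℝ (Fin n) := WithLp.toLp 2 (fun l => η * Y l jhat) with hu
    set v : EuclideanSpace ℝ (Fin n) := WithLp.toLp 2 (fun l => g Y l jhat) with hv
    have huv : ‖u - v‖ = Real.sqrt (∑ l, (η * Y l jhat - g Y l jhat) ^ 2) := by
      rw [EuclideanSpace.norm_eq]
      congr 1
      apply Finset.sum_congr rfl
      intro l _
      rw [Real.norm_eq_abs, sq_abs]
      rfl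
    have hun : ‖u‖ = η := by
      rw [EuclideanSpace.norm_eq]
      have h2 : ∑ l, ‖u l‖ ^ 2 = η ^ 2 := by
        have h3 : ∀ l : Fin n, ‖u l‖ ^ 2 = η ^ 2 * (Y l jhat) ^ 2 := by
          intro l
          rw [Real.norm_eq_abs, sq_abs]
          show (η * Y l jhat) ^ 2 = _
          ring
        rw [Finset.sum_congr rfl fun l _ => h3 l, ← Finset.mul_sum, hYcol, mul_one]
      rw [h2, Real.sqrt_sq hη.le]
    have hvn : ‖v‖ ≤ C := by
      have : ‖v‖ = Real.sqrt (∑ l, (g Y l jhat) ^ 2) := by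
        rw [EuclideanSpace.norm_eq]
        congr 1
        refine Finset.sum_congr rfl fun l _ => ?_
        rw [Real.norm_eq_abs, sq_abs]
      rw [this]
      exact le_trans (col_sqrt_le_fnorm (g Y) jhat) hgY
    calc q ≤ Real.sqrt (∑ l', (η * Y l' jhat - g Y l' jhat) ^ 2) := Real.sqrt_le_sqrt hsum
      _ = ‖u - v‖ := huv.symm
      _ ≤ ‖u‖ + ‖v‖ := norm_sub_le u v
      _ ≤ η + C := by rw [hun]; linarith
  -- X' i jhat
  have hXi : X' i jhat = -(g Y i jhat) / q := by
    rw [hX'1 jhat hnz i, hWi]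
  have hXinn : 0 ≤ X' i jhat := by
    rw [hXi]
    exact div_nonneg (by linarith) hqpos.le
  have key : -(g Y i jhat) = q * X' i jhat := by
    rw [hXi]
    field_simp
  rw [key]
  have step1 : q * X' i jhat ≤ (η + C) * X' i jhat :=
    mul_le_mul_of_nonneg_right hqle hXinn
  refine step1.trans (mul_le_mul_of_nonneg_left ?_ hηC)
  have : X' i jhat = (X' - Y) i jhat := by
    rw [Matrix.sub_apply, hzrow, sub_zero]
  rw [this]
  exact le_trans (le_abs_self _) (abs_entry_le_fnorm (X' - Y) i jhat)
end

section
/- Let f : ℝ^{n×p} → ℝ be differentiable with f̲ ≤ f(X) ≤ f̄ for every X ∈ ℝ^{n×p} with XᵀX = I_p. Let L ≥ 0, η > L, θ > 0, C > 0, and let (X_k)_{k≥0}, (Y_k)_{k≥0} be sequences in O^{n,p}_+ satisfying for all k: (a) f(X_k) − f(X_{k+1}) ≥ ((η − L)/2)·(‖Y_k − X_k‖_F² + ‖X_{k+1} − Y_k‖_F²); (b) |[grad f(Y_k)]_{i,j}| ≤ 2(η + L)·‖Y_k − X_k‖_F for all (i,j) ∈ supp(Y_k); (c) whenever ‖Y_k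 − X_k‖_F < θ, max{0, −[∇f(Y_k)]_{i,j}} ≤ (η + C)·‖X_{k+1} − Y_k‖_F for all i ∈ zrow(Y_k) and all j. Then for every ε ∈ (0,1) there exists k ≤ K_ε := ⌈(2(f̄ − f̲)/((η − L)ε²))·max{2ε²/θ², 4(η + L)², (η + C)²}⌉ such that Y_k is an ε-approximate first-order stationary point. -/
open Matrix

attribute [local instance] Matrix.frobeniusNormedAddCommGroup Matrix.frobeniusNormedSpace

/-- Theorem `thm:complexity`: under the sufficient decrease (a),
support bound (b) and zero-row bound (c), for every `ε ∈ (0,1)` some iterate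
`Y_k` with `k ≤ K_ε` is an `ε`-approximate first-order stationary point, where
`K_ε = ⌈(2(f̄ − f̲)/((η − L)ε²))·max{2ε²/θ², 4(η + L)², (η + C)²}⌉`. -/
theorem iteration_complexity
    {n p : ℕ}
    (f : Matrix (Fin n) (Fin p) ℝ → ℝ)
    (g : Matrix (Fin n) (Fin p) ℝ → Matrix (Fin n) (Fin p) ℝ)
    (hgrad : IsGradient f g)
    (fl fu : ℝ)
    (hbound : ∀ X : Matrix (Fin n) (Fin p) ℝ, Xᵀ * X = 1 → fl ≤ f X ∧ f X ≤ fu)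
    (L η θ C : ℝ) (hL : 0 ≤ L) (hη : L < η) (hθ : 0 < θ) (hC : 0 < C)
    (X Y : ℕ → Matrix (Fin n) (Fin p) ℝ)
    (hXf : ∀ k, (X k)ᵀ * X k = 1 ∧ ∀ i j, 0 ≤ X k i j)
    (hYf : ∀ k, (Y k)ᵀ * Y k = 1 ∧ ∀ i j, 0 ≤ Y k i j)
    (ha : ∀ k, (η - L) / 2 * (fnorm (Y k - X k) ^ 2 + fnorm (X (k + 1) - Y k) ^ 2)
        ≤ f (X k) - f (X (k + 1)))
    (hb : ∀ k, ∀ i j, Y k i j ≠ 0 →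
        |g (Y k) i j - (∑ i', Y k i' j * g (Y k) i' j) * Y k i j|
          ≤ 2 * (η + L) * fnorm (Y k - X k))
    (hc : ∀ k, fnorm (Y k - X k) < θ → ∀ i, (∀ j, Y k i j = 0) → ∀ j,
        max 0 (-(g (Y k) i j)) ≤ (η + C) * fnorm (X (k + 1) - Y k)) :
    ∀ ε : ℝ, 0 < ε → ε < 1 →
      ∃ k : ℕ,
        k ≤ ⌈(2 * (fu - fl) / ((η - L) * ε ^ 2)) *
              max (2 * ε ^ 2 / θ ^ 2) (max (4 * (η + L) ^ 2) ((η + C) ^ 2))⌉₊ ∧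
        (∀ i j, Y k i j ≠ 0 →
          |g (Y k) i j - (∑ i', Y k i' j * g (Y k) i' j) * Y k i j| ≤ ε) ∧
        (∀ i, (∀ j, Y k i j = 0) → ∀ j, -ε ≤ g (Y k) i j) := by

  intro ε hε hε1
  set M := max (2 * ε ^ 2 / θ ^ 2) (max (4 * (η + L) ^ 2) ((η + C) ^ 2)) with hM
  have hMpos : 0 < M := lt_of_lt_of_le (by positivity) (le_max_left _ _)
  have hM1 : 2 * ε ^ 2 / θ ^ 2 ≤ M := le_max_left _ _
  have hM2 : 4 * (η + L) ^ 2 ≤ M := le_trans (le_max_left _ _) (le_max_right _ _)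
  have hM3 : (η + C) ^ 2 ≤ M := le_trans (le_max_right _ _) (le_max_right _ _)
  have hεL : 0 < η - L := sub_pos.2 hη
  have hflu : fl ≤ fu := by
    obtain ⟨h1, h2⟩ := hbound (X 0) (hXf 0).1
    linarith
  set a : ℝ := 2 * (fu - fl) / ((η - L) * ε ^ 2) * M with haa
  set K := ⌈a⌉₊ with hKdef
  set δ := ε ^ 2 / M with hδ
  have hδpos : 0 < δ := by positivity
  have hnn : ∀ (m q : ℕ) (A : Matrix (Fin m) (Fin q) ℝ), 0 ≤ fnorm A := by
    intro m q A; exact Real.sqrt_nonneg _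
  have key : ∃ k ≤ K, fnorm (Y k - X k) ^ 2 + fnorm (X (k + 1) - Y k) ^ 2 < δ := by
    by_contra h
    push_neg at h
    have hterm : ∀ k ∈ Finset.range (K + 1), (η - L) / 2 * δ ≤ f (X k) - f (X (k + 1)) := by
      intro k hk
      have hk' : k ≤ K := Nat.lt_succ_iff.mp (Finset.mem_range.mp hk)
      have h1 := ha k
      have h2 := h k hk'
      nlinarith
    have hsum : (K + 1 : ℝ) * ((η - L) / 2 * δ) ≤ f (X 0) - f (X (K + 1)) := by
      calc (K + 1 : ℝ) * ((η - L) / 2 * δ)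
          = ∑ _k ∈ Finset.range (K + 1), (η - L) / 2 * δ := by
            rw [Finset.sum_const, Finset.card_range, nsmul_eq_mul]; push_cast; ring
        _ ≤ ∑ k ∈ Finset.range (K + 1), (f (X k) - f (X (k + 1))) :=
            Finset.sum_le_sum hterm
        _ = f (X 0) - f (X (K + 1)) := Finset.sum_range_sub' (fun k => f (X k)) (K + 1)
    obtain ⟨h01, h02⟩ := hbound (X 0) (hXf 0).1
    obtain ⟨h11, h12⟩ := hbound (X (K + 1)) (hXf (K + 1)).1
    have hKa : a ≤ (K : ℝ) := Nat.le_ceil a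
    have haδ : a * ((η - L) / 2 * δ) = fu - fl := by
      rw [haa, hδ]
      field_simp
    have hcpos : 0 < (η - L) / 2 * δ := by positivity
    nlinarith
  obtain ⟨k, hk, hlt⟩ := key
  refine ⟨k, hk, ?_, ?_⟩
  · intro i j hij
    have hb' := hb k i j hij
    have h1 : fnorm (Y k - X k) ^ 2 < δ := by
      linarith [sq_nonneg (fnorm (X (k + 1) - Y k))]
    have hnn1 := hnn n p (Y k - X k)
    have hηL : 0 ≤ η + L := by linarith
    have h2 : (2 * (η + L) * fnorm (Y k - X k)) ^ 2 < ε ^ 2 := by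
      have : M * fnorm (Y k - X k) ^ 2 < ε ^ 2 := by
        rw [hδ] at h1
        calc M * fnorm (Y k - X k) ^ 2 < M * (ε ^ 2 / M) := by
              exact mul_lt_mul_of_pos_left h1 hMpos
          _ = ε ^ 2 := by field_simp
      calc (2 * (η + L) * fnorm (Y k - X k)) ^ 2
          = 4 * (η + L) ^ 2 * fnorm (Y k - X k) ^ 2 := by ring
        _ ≤ M * fnorm (Y k - X k) ^ 2 :=
            mul_le_mul_of_nonneg_right hM2 (sq_nonneg _)
        _ < ε ^ 2 := this
    have h3 : 2 * (η + L) * fnorm (Y k - X k) < ε :=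
      lt_of_pow_lt_pow_left₀ 2 (le_of_lt hε) h2
    linarith [hb']
  · intro i hi j
    have h1 : fnorm (Y k - X k) ^ 2 < δ := by
      linarith [sq_nonneg (fnorm (X (k + 1) - Y k))]
    have h2 : fnorm (X (k + 1) - Y k) ^ 2 < δ := by
      linarith [sq_nonneg (fnorm (Y k - X k))]
    have hnn1 := hnn n p (Y k - X k)
    have hnn2 := hnn n p (X (k + 1) - Y k)
    have hθ2 : δ ≤ θ ^ 2 / 2 := by
      rw [hδ]
      rw [div_le_div_iff₀ hMpos (by norm_num : (0:ℝ) < 2)]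
      have : (2 * ε ^ 2 / θ ^ 2) * (θ ^ 2) ≤ M * θ ^ 2 :=
        mul_le_mul_of_nonneg_right hM1 (sq_nonneg θ)
      calc ε ^ 2 * 2 = (2 * ε ^ 2 / θ ^ 2) * (θ ^ 2) := by field_simp
        _ ≤ M * θ ^ 2 := this
        _ = θ ^ 2 * M := by ring
    have hYXθ : fnorm (Y k - X k) < θ := by
      have : fnorm (Y k - X k) ^ 2 < θ ^ 2 := by linarith [sq_nonneg θ]
      exact lt_of_pow_lt_pow_left₀ 2 (le_of_lt hθ) this
    have hc' := hc k hYXθ i hi j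
    have hηC : 0 < η + C := by linarith
    have h4 : ((η + C) * fnorm (X (k + 1) - Y k)) ^ 2 < ε ^ 2 := by
      have : M * fnorm (X (k + 1) - Y k) ^ 2 < ε ^ 2 := by
        rw [hδ] at h2
        calc M * fnorm (X (k + 1) - Y k) ^ 2 < M * (ε ^ 2 / M) :=
              mul_lt_mul_of_pos_left h2 hMpos
          _ = ε ^ 2 := by field_simp
      calc ((η + C) * fnorm (X (k + 1) - Y k)) ^ 2
          = (η + C) ^ 2 * fnorm (X (k + 1) - Y k) ^ 2 := by ring
        _ ≤ M * fnorm (X (k + 1) - Y k) ^ 2 :=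
            mul_le_mul_of_nonneg_right hM3 (sq_nonneg _)
        _ < ε ^ 2 := this
    have h5 : (η + C) * fnorm (X (k + 1) - Y k) < ε :=
      lt_of_pow_lt_pow_left₀ 2 (le_of_lt hε) h4
    have h6 : -(g (Y k) i j) ≤ max 0 (-(g (Y k) i j)) := le_max_right _ _
    linarith
end

section
/- Let (X_k)_{k≥0} and (Y_k)_{k≥0} be sequences in O^{n,p}_+ such that lim_{k→∞} (‖Y_k − X_k‖_F² + ‖X_{k+1} − Y_k‖_F²) = 0 and such that, for every k and every row index i, if both the i-th row of X_k and the i-th row of Y_k are nonzero then their (unique) nonzero entries lie in the same column. Then for each row index i ∈ {1,…,n}, at least one of the following holds: (i) there exist K ∈ ℕ and a column index j such that for all k ≥ K, [X_k]_{i,l} = 0 for every l ≠ j; (ii) liminf_{k→∞} ‖[X_k]_{i,:}‖₂ = 0. -/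
open Matrix

/-- A nonnegative matrix with orthonormal columns has at most one nonzero
entry per row. -/
lemma support_unique {n p : ℕ} {X : Matrix (Fin n) (Fin p) ℝ}
    (h1 : Xᵀ * X = 1) (h2 : ∀ i j, 0 ≤ X i j) {i : Fin n} {j j' : Fin p}
    (hjj : j ≠ j') : X i j = 0 ∨ X i j' = 0 := by
  have h0 : ∑ k, X k j * X k j' = 0 := by
    have := congrFun (congrFun h1 j) j'
    simpa [Matrix.mul_apply, Matrix.transpose_apply, Matrix.one_apply, hjj] using this
  have hterm : X i j * X i j' = 0 :=
    (Finset.sum_eq_zero_iff_of_nonneg (fun k _ => mul_nonneg (h2 k j) (h2 k j'))).mp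
      h0 i (Finset.mem_univ i)
  exact mul_eq_zero.mp hterm

lemma sq_le_fnorm_sq {n p : ℕ} (A : Matrix (Fin n) (Fin p) ℝ) (i : Fin n) (j : Fin p) :
    (A i j) ^ 2 ≤ fnorm A ^ 2 := by
  have hnn : (0:ℝ) ≤ ∑ i, ∑ j, (A i j) ^ 2 := by positivity
  rw [fnorm, Real.sq_sqrt hnn]
  calc (A i j) ^ 2 ≤ ∑ j, (A i j) ^ 2 :=
        Finset.single_le_sum (f := fun j => (A i j) ^ 2)
          (fun _ _ => sq_nonneg _) (Finset.mem_univ j)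
    _ ≤ ∑ i, ∑ j, (A i j) ^ 2 :=
        Finset.single_le_sum (f := fun i => ∑ j, (A i j) ^ 2)
          (fun _ _ => Finset.sum_nonneg fun _ _ => sq_nonneg _) (Finset.mem_univ i)

lemma fnorm_sq_nonneg {n p : ℕ} (A : Matrix (Fin n) (Fin p) ℝ) : 0 ≤ fnorm A ^ 2 :=
  sq_nonneg _

/-- Theorem `thm:support`, finite support identification: if the
successive distances tend to zero and, for every `k` and every row `i`, the
nonzero entries of the `i`-th rows of `X_k` and `Y_k` (when both rows are
nonzero) lie in the same column, then for each row `i` either the position of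
the nonzero entry in `[X_k]_{i,:}` is eventually fixed, or
`liminf_{k→∞} ‖[X_k]_{i,:}‖₂ = 0`. -/
theorem finite_support_identification
    {n p : ℕ}
    (X Y : ℕ → Matrix (Fin n) (Fin p) ℝ)
    (hXf : ∀ k, (X k)ᵀ * X k = 1 ∧ ∀ i j, 0 ≤ X k i j)
    (hYf : ∀ k, (Y k)ᵀ * Y k = 1 ∧ ∀ i j, 0 ≤ Y k i j)
    (hlim : Filter.Tendsto
        (fun k => fnorm (Y k - X k) ^ 2 + fnorm (X (k + 1) - Y k) ^ 2)
        Filter.atTop (nhds 0))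
    (halign : ∀ k, ∀ i : Fin n, ∀ j j' : Fin p,
        X k i j ≠ 0 → Y k i j' ≠ 0 → j = j') :
    ∀ i : Fin n,
      (∃ K : ℕ, ∃ j : Fin p, ∀ k, K ≤ k → ∀ l : Fin p, l ≠ j → X k i l = 0) ∨
      Filter.liminf (fun k => Real.sqrt (∑ j, (X k i j) ^ 2)) Filter.atTop = 0 := by
  intro i
  by_contra hcon
  push_neg at hcon
  obtain ⟨h1, h2⟩ := hcon
  set u : ℕ → ℝ := fun k => Real.sqrt (∑ j, (X k i j) ^ 2) with hu
  have hunn : ∀ k, 0 ≤ u k := fun k => Real.sqrt_nonneg _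
  -- entrywise bound: each entry of X k is at most 1 in absolute value
  have hub : ∀ k, u k ≤ Real.sqrt p := by
    intro k
    apply Real.sqrt_le_sqrt
    calc ∑ j, (X k i j) ^ 2 ≤ ∑ _j : Fin p, (1:ℝ) := by
          apply Finset.sum_le_sum
          intro j _
          have hd := congrFun (congrFun (hXf k).1 j) j
          have hcol : ∑ l, X k l j * X k l j = 1 := by
            simpa [Matrix.mul_apply, Matrix.transpose_apply, Matrix.one_apply] using hd
          have : (X k i j) ^ 2 ≤ ∑ l, (X k l j) ^ 2 :=
            Finset.single_le_sum (f := fun l => (X k l j) ^ 2)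
              (fun _ _ => sq_nonneg _) (Finset.mem_univ i)
          calc (X k i j) ^ 2 ≤ ∑ l, (X k l j) ^ 2 := this
            _ = 1 := by simpa [sq] using hcol
      _ = p := by simp
  -- the liminf is positive
  have hbdd : Filter.IsBoundedUnder (· ≥ ·) Filter.atTop u :=
    ⟨0, Filter.eventually_map.mpr (Filter.Eventually.of_forall hunn)⟩
  have hcobdd : Filter.IsCoboundedUnder (· ≥ ·) Filter.atTop u :=
    Filter.isCoboundedUnder_ge_of_le _ hub
  have hL0 : 0 ≤ Filter.liminf u Filter.atTop :=
    Filter.le_liminf_of_le hcobdd (Filter.Eventually.of_forall hunn)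
  have hLpos : 0 < Filter.liminf u Filter.atTop := lt_of_le_of_ne hL0 (Ne.symm h2)
  set ε : ℝ := Filter.liminf u Filter.atTop / 2 with hε
  have hεpos : 0 < ε := by positivity
  have hεlt : ε < Filter.liminf u Filter.atTop := by
    rw [hε]; linarith
  have hev1 : ∀ᶠ k in Filter.atTop, ε < u k :=
    Filter.eventually_lt_of_lt_liminf hεlt hbdd
  have hev2 : ∀ᶠ k in Filter.atTop,
      fnorm (Y k - X k) ^ 2 + fnorm (X (k + 1) - Y k) ^ 2 < ε ^ 2 :=
    hlim.eventually (gt_mem_nhds (by positivity))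
  obtain ⟨K, hK⟩ := (hev1.and hev2).exists_forall_of_atTop
  have hεu : ∀ k, K ≤ k → ε < u k := fun k hk => (hK k hk).1
  have hsum : ∀ k, K ≤ k →
      fnorm (Y k - X k) ^ 2 + fnorm (X (k + 1) - Y k) ^ 2 < ε ^ 2 :=
    fun k hk => (hK k hk).2
  -- each row K ≤ k is nonzero
  have hne : ∀ k, K ≤ k → ∃ j, X k i j ≠ 0 := by
    intro k hk
    by_contra hz
    push_neg at hz
    have : u k = 0 := by
      rw [hu]
      simp only
      rw [Finset.sum_eq_zero (fun j _ => by rw [hz j]; ring), Real.sqrt_zero]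
    linarith [hεu k hk]
  -- the column of X K's nonzero entry
  obtain ⟨j, hj⟩ := hne K le_rfl
  -- u k ^ 2 = (X k i m)^2 when all other entries vanish
  have husq : ∀ k (m : Fin p), (∀ l, l ≠ m → X k i l = 0) →
      u k ^ 2 = (X k i m) ^ 2 := by
    intro k m hm
    rw [hu]
    simp only
    rw [Real.sq_sqrt (by positivity)]
    exact Finset.sum_eq_single m (fun l _ hl => by rw [hm l hl]; ring)
      (fun h => absurd (Finset.mem_univ m) h)
  -- main induction: the support column is frozen from K on
  have hmain : ∀ k, K ≤ k → ∀ l, l ≠ j → X k i l = 0 := by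
    intro k hk
    induction k, hk using Nat.le_induction with
    | base =>
      intro l hl
      rcases support_unique (hXf K).1 (hXf K).2 hl with h | h
      · exact h
      · exact absurd h hj
    | succ k hk ih =>
      intro l hl
      by_contra hXl
      -- X k's nonzero entry is at column j
      have hXkj : X k i j ≠ 0 := by
        obtain ⟨m, hm⟩ := hne k hk
        by_cases hmj : m = j
        · rwa [hmj] at hm
        · exact absurd (ih m hmj) hm
      -- X (k+1)'s row is supported at l
      have hXk1 : ∀ l', l' ≠ l → X (k + 1) i l' = 0 := by
        intro l' hl'
        rcases support_unique (hXf (k + 1)).1 (hXf (k + 1)).2 hl' with h | h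
        · exact h
        · exact absurd h hXl
      have hεk1 : ε ^ 2 < (X (k + 1) i l) ^ 2 := by
        have h := hεu (k + 1) (by omega)
        have := husq (k + 1) l hXk1
        nlinarith [hunn (k + 1)]
      have hεk : ε ^ 2 < (X k i j) ^ 2 := by
        have h := hεu k hk
        have := husq k j ih
        nlinarith [hunn k]
      have hs := hsum k hk
      by_cases hY : ∃ m, Y k i m ≠ 0
      · obtain ⟨m, hYm⟩ := hY
        have hjm : j = m := halign k i j m hXkj hYm
        -- Y k i l = 0
        have hYl : Y k i l = 0 := by
          rcases support_unique (hYf k).1 (hYf k).2 (show m ≠ l by rw [← hjm]; exact hl.symm) with h | h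
          · exact absurd h hYm
          · exact h
        have hb := sq_le_fnorm_sq (X (k + 1) - Y k) i l
        rw [Matrix.sub_apply, hYl, sub_zero] at hb
        linarith [fnorm_sq_nonneg (Y k - X k)]
      · push_neg at hY
        have hb := sq_le_fnorm_sq (Y k - X k) i j
        rw [Matrix.sub_apply, hY j, zero_sub, neg_sq] at hb
        linarith [fnorm_sq_nonneg (X (k + 1) - Y k)]
  obtain ⟨k, hk, l, hlj, hXkl⟩ := h1 K j
  exact hXkl (hmain k hk l hlj)
end

section
/- Let A ∈ ℝ^{n×n} be a symmetric matrix all of whose entries are strictly negative, and consider f(X) = tr(XᵀAX) (so ∇f(X) = 2AX). Then for every X ∈ O^{n,p}_+ every entry of AX is strictly negative; consequently, every first-order stationary point X ∈ O^{n,p}_+ of the problem min{f(X) : X ∈ O^{n,p}_+} has no zero rows, i.e., zrow(X) = ∅. -/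
open Matrix

/-- for a symmetric matrix `A` with all entries strictly negative
and `f(X) = tr(XᵀAX)` (so `∇f(X) = 2AX`), every `X ∈ O^{n,p}_+` has all entries
of `AX` strictly negative; consequently every first-order stationary point
`X ∈ O^{n,p}_+` of `min f` over `O^{n,p}_+` has no zero rows. -/
theorem quadratic_objective_stationary_no_zero_rows
    {n p : ℕ} (hp : 1 ≤ p)
    (A : Matrix (Fin n) (Fin n) ℝ)
    (hsymm : Aᵀ = A) (hneg : ∀ i j, A i j < 0) :
    (∀ X : Matrix (Fin n) (Fin p) ℝ, Xᵀ * X = 1 → (∀ i j, 0 ≤ X i j) →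
        ∀ i j, (A * X) i j < 0) ∧
    (∀ X : Matrix (Fin n) (Fin p) ℝ, Xᵀ * X = 1 → (∀ i j, 0 ≤ X i j) →
        (∀ i j, X i j ≠ 0 →
          2 * (A * X) i j - (∑ i', X i' j * (2 * (A * X) i' j)) * X i j = 0) →
        (∀ i, (∀ j, X i j = 0) → ∀ j, 0 ≤ 2 * (A * X) i j) →
        ∀ i, ∃ j, X i j ≠ 0) := by
  have key : ∀ X : Matrix (Fin n) (Fin p) ℝ, Xᵀ * X = 1 → (∀ i j, 0 ≤ X i j) →
      ∀ i j, (A * X) i j < 0 := by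
    intro X horth hnn i j
    have hcol : ∑ k, X k j * X k j = 1 := by
      have := congrFun (congrFun horth j) j
      simpa [Matrix.mul_apply, Matrix.one_apply, Matrix.transpose_apply] using this
    have hex : ∃ k, X k j ≠ 0 := by
      by_contra h
      push_neg at h
      simp [h] at hcol
    obtain ⟨k, hk⟩ := hex
    have hkpos : 0 < X k j := lt_of_le_of_ne (hnn k j) (Ne.symm hk)
    rw [Matrix.mul_apply]
    have : ∑ l, A i l * X l j < ∑ _l : Fin n, (0:ℝ) := by
      apply Finset.sum_lt_sum
      · intro l _
        exact mul_nonpos_of_nonpos_of_nonneg (hneg i l).le (hnn l j)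
      · exact ⟨k, Finset.mem_univ k, mul_neg_of_neg_of_pos (hneg i k) hkpos⟩
    simpa using this
  refine ⟨key, ?_⟩
  intro X horth hnn _hstat hzrow i
  by_contra h
  push_neg at h
  have h0 : X i = fun j => 0 := funext h
  have := hzrow i h ⟨0, hp⟩
  have hlt := key X horth hnn i ⟨0, hp⟩
  nlinarith
end

section
/- Let 1 ≤ p ≤ n and let S ∈ ℝ^{n×p}. Then S = sign(X) for some X ∈ O^{n,p}_+ if and only if all entries of S lie in {0,1}, each row of S contains at most one entry equal to 1, and each column of S contains at least one entry equal to 1. -/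
open Matrix

/-- The entrywise sign matrix. -/
noncomputable def msign {n p : ℕ} (X : Matrix (Fin n) (Fin p) ℝ) :
    Matrix (Fin n) (Fin p) ℝ :=
  Matrix.of fun i j => if 0 < X i j then 1 else if X i j < 0 then -1 else 0

lemma msign_eq_one_iff {n p : ℕ} (X : Matrix (Fin n) (Fin p) ℝ) (i : Fin n) (j : Fin p) :
    msign X i j = 1 ↔ 0 < X i j := by
  simp only [msign, Matrix.of_apply]
  split_ifs with h1 h2
  · simp [h1]
  · constructor <;> intro h <;> [norm_num at h; exact absurd h h1]
  · constructor <;> intro h <;> [norm_num at h; exact absurd h h1]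

/-- for `1 ≤ p ≤ n`, a matrix `S` equals `sign(X)` for some
`X ∈ O^{n,p}_+` iff its entries lie in `{0,1}`, each row has at most one entry
equal to `1`, and each column has at least one entry equal to `1`. -/
theorem sign_pattern_characterization
    {n p : ℕ} (hp : 1 ≤ p) (hpn : p ≤ n)
    (S : Matrix (Fin n) (Fin p) ℝ) :
    (∃ X : Matrix (Fin n) (Fin p) ℝ,
        (Xᵀ * X = 1 ∧ ∀ i j, 0 ≤ X i j) ∧ S = msign X) ↔
      ((∀ i j, S i j = 0 ∨ S i j = 1) ∧
        (∀ i j j', S i j = 1 → S i j' = 1 → j = j') ∧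
        (∀ j, ∃ i, S i j = 1)) := by
  classical
  constructor
  · rintro ⟨X, ⟨hX, hpos⟩, rfl⟩
    refine ⟨?_, ?_, ?_⟩
    · intro i j
      simp only [msign, Matrix.of_apply]
      rcases lt_or_eq_of_le (hpos i j) with h | h
      · right; simp [h]
      · left; simp [← h, lt_irrefl]
    · intro i j j' hj hj'
      rw [msign_eq_one_iff] at hj hj'
      by_contra hne
      have h0 : (Xᵀ * X) j j' = 0 := by
        rw [hX]; simp [Matrix.one_apply, hne]
      have hsum : ∑ k, X k j * X k j' = 0 := by
        simpa [Matrix.mul_apply, Matrix.transpose_apply] using h0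
      have hterm : X i j * X i j' = 0 :=
        (Finset.sum_eq_zero_iff_of_nonneg
          (fun k _ => mul_nonneg (hpos k j) (hpos k j'))).mp hsum i (Finset.mem_univ i)
      exact absurd hterm (ne_of_gt (mul_pos hj hj'))
    · intro j
      by_contra hno
      push_neg at hno
      have hz : ∀ i, X i j = 0 := by
        intro i
        have hni : ¬ 0 < X i j := fun h => hno i ((msign_eq_one_iff X i j).mpr h)
        exact le_antisymm (not_lt.mp hni) (hpos i j)
      have h1 : (Xᵀ * X) j j = 1 := by rw [hX]; simp [Matrix.one_apply]
      have : (Xᵀ * X) j j = 0 := by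
        simp [Matrix.mul_apply, Matrix.transpose_apply, hz]
      rw [this] at h1
      norm_num at h1
  · rintro ⟨h01, hrow, hcol⟩
    set c : Fin p → ℝ := fun j => ∑ i, S i j with hc_def
    have hSnn : ∀ i j, 0 ≤ S i j := by
      intro i j; rcases h01 i j with h | h <;> simp [h]
    have hc : ∀ j, 0 < c j := by
      intro j
      obtain ⟨i, hi⟩ := hcol j
      have : (1 : ℝ) ≤ c j := by
        rw [← hi]
        exact Finset.single_le_sum (fun k _ => hSnn k j) (Finset.mem_univ i)
      linarith
    refine ⟨Matrix.of fun i j => S i j / Real.sqrt (c j), ⟨?_, ?_⟩, ?_⟩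
    · ext j j'
      rw [Matrix.mul_apply]
      simp only [Matrix.transpose_apply, Matrix.of_apply]
      by_cases hjj : j = j'
      · subst hjj
        have : ∀ i, S i j / Real.sqrt (c j) * (S i j / Real.sqrt (c j)) = S i j / c j := by
          intro i
          rw [div_mul_div_comm, Real.mul_self_sqrt (hc j).le]
          rcases h01 i j with h | h <;> simp [h]
        rw [Finset.sum_congr rfl (fun i _ => this i), ← Finset.sum_div]
        rw [div_self (ne_of_gt (hc j))]
        simp [Matrix.one_apply]
      · have : ∀ i, S i j / Real.sqrt (c j) * (S i j' / Real.sqrt (c j')) = 0 := by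
          intro i
          rcases h01 i j with h | h
          · simp [h]
          · rcases h01 i j' with h' | h'
            · simp [h']
            · exact absurd (hrow i j j' h h') hjj
        rw [Finset.sum_congr rfl (fun i _ => this i)]
        simp [Matrix.one_apply, hjj]
    · intro i j
      exact div_nonneg (hSnn i j) (Real.sqrt_nonneg _)
    · ext i j
      rcases h01 i j with h | h
      · simp [msign, h]
      · rw [h, eq_comm, msign_eq_one_iff]
        rw [Matrix.of_apply, h]
        exact div_pos one_pos (Real.sqrt_pos.mpr (hc j))
end
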